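/- Let ℓ_a, ℓ_b > 0 and real-valued f_a ∈ L²(0,ℓ_a), f_b ∈ L²(0,ℓ_b) be given. For λ ∈ ℝ let I(E,λ) denote the Fricke–Vogt invariant along the curve of initial conditions for the scaled potential pieces λf_a, λf_b (assumed well defined for all E ∈ ℝ and λ ∈ ℝ). Then I(E,λ) tends to zero uniformly in E > 0 as λ → 0: for every ε > 0 there exists λ₀ > 0 such that |I(E,λ)| < ε for every E > 0 and every λ with 0 < |λ| < λ₀. -/

import Mathlib

open MeasureTheory Set Filter
open scoped ENNReal

noncomputable section

/-- `IsSolution ℓ E f y y'` : `y` is a solution of `-y'' + f·y = E·y` on `[0,ℓ]`: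
`y` is differentiable with continuous derivative `y'` on `[0,ℓ]`, and `y'` is absolutely
continuous with a.e. derivative `(f - E)·y` (encoded in integrated form). -/
def IsSolution (ℓ E : ℝ) (f y y' : ℝ → ℝ) : Prop :=
  (∀ x ∈ Icc (0:ℝ) ℓ, HasDerivAt y (y' x) x) ∧
  ContinuousOn y' (Icc (0:ℝ) ℓ) ∧
  (∀ x ∈ Icc (0:ℝ) ℓ, y' x = y' 0 + ∫ t in (0:ℝ)..x, (f t - E) * y t)

/-- Neumann solution: `y(0) = 1`, `y'(0) = 0`. -/
def IsNeumannSolution (ℓ E : ℝ) (f y y' : ℝ → ℝ) : Prop :=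
  IsSolution ℓ E f y y' ∧ y 0 = 1 ∧ y' 0 = 0

/-- Dirichlet solution: `y(0) = 0`, `y'(0) = 1`. -/
def IsDirichletSolution (ℓ E : ℝ) (f y y' : ℝ → ℝ) : Prop :=
  IsSolution ℓ E f y y' ∧ y 0 = 0 ∧ y' 0 = 1

/-- `v` is the half-trace `x_f(E) = (ψ_N(ℓ,E) + ψ_D'(ℓ,E))/2`. -/
def IsHalfTrace (ℓ : ℝ) (f : ℝ → ℝ) (E v : ℝ) : Prop :=
  ∃ yN yN' yD yD' : ℝ → ℝ,
    IsNeumannSolution ℓ E f yN yN' ∧ IsDirichletSolution ℓ E f yD yD' ∧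
    v = (yN ℓ + yD' ℓ) / 2

/-- The Fricke–Vogt invariant. -/
def FV (x y z : ℝ) : ℝ := x ^ 2 + y ^ 2 + z ^ 2 - 2 * x * y * z - 1

/-- The Fibonacci trace map `T(x,y,z) = (2xy - z, x, y)`. -/
def traceMap : ℝ × ℝ × ℝ → ℝ × ℝ × ℝ :=
  fun p => (2 * p.1 * p.2.1 - p.2.2, p.1, p.2.1)

/-- The set `B` of energies whose forward orbit under the trace map, starting from the
curve of initial conditions `γ`, is bounded. -/
def traceSpectrum (γ : ℝ → ℝ × ℝ × ℝ) : Set ℝ :=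
  {E | Bornology.IsBounded (Set.range fun n : ℕ => traceMap^[n] (γ E))}

/-- Local Hausdorff dimension of `F` at `E`:
`lim_{ε ↓ 0} dim_H (F ∩ (E-ε, E+ε))`, which equals the infimum by monotonicity. -/
def locDim (F : Set ℝ) (E : ℝ) : ℝ≥0∞ :=
  ⨅ (ε : ℝ) (_ : 0 < ε), dimH (F ∩ Ioo (E - ε) (E + ε))

/-- Concatenation `f_ab = (f_a | f_b)` (on `[0, ℓa + ℓb)`). -/
def concatPair (ℓa : ℝ) (fa fb : ℝ → ℝ) : ℝ → ℝ :=
  fun x => if x < ℓa then fa x else fb (x - ℓa)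

/-- Fibonacci substitution `S(a) = ab`, `S(b) = a`, with `a = true`, `b = false`. -/
def fibSub : List Bool → List Bool :=
  fun w => w.flatMap fun c => if c then [true, false] else [true]

/-- The Fibonacci word `u`, the fixed point of the substitution starting with `a`:
its `n`-th letter is the `n`-th letter of `Sᵏ(a)` for any large `k` (here `k = n+2`). -/
def fibWord (n : ℕ) : Bool := (fibSub^[n + 2] [true]).getD n true

/-- `V` is the potential on `[0,∞)` obtained by concatenating `f_{u_0} | f_{u_1} | ⋯`
along the Fibonacci word `u`. -/
def IsFibPotential (ℓa ℓb : ℝ) (fa fb V : ℝ → ℝ) : Prop :=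
  ∀ n : ℕ, ∀ x : ℝ,
    (∑ j ∈ Finset.range n, (if fibWord j then ℓa else ℓb)) ≤ x →
    x < (∑ j ∈ Finset.range (n + 1), (if fibWord j then ℓa else ℓb)) →
    V x = (if fibWord n then fa else fb) (x - ∑ j ∈ Finset.range n, (if fibWord j then ℓa else ℓb))

/-- `(f_a, f_b)` is aperiodic: the concatenated Fibonacci potential `V` has no period `p > 0`. -/
def FibAperiodic (ℓa ℓb : ℝ) (fa fb : ℝ → ℝ) : Prop :=
  ∀ V : ℝ → ℝ, IsFibPotential ℓa ℓb fa fb V → ¬ ∃ p > 0, ∀ x ≥ 0, V (x + p) = V x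

end


----------------------------------------------------------------
-- Auxiliary lemmas
----------------------------------------------------------------

section Aux

open Real

lemma contMul_integrable {u g : ℝ → ℝ} {a b : ℝ}
    (hu : ContinuousOn u (Icc a b)) (hg : IntegrableOn g (Ioc a b)) :
    IntegrableOn (fun t => u t * g t) (Ioc a b) := by
  rcases le_or_gt a b with hab | hab
  · obtain ⟨C, hC⟩ := (isCompact_Icc).exists_bound_of_continuousOn hu
    refine Integrable.bdd_mul (c := C) hg
      ((hu.mono Ioc_subset_Icc_self).aestronglyMeasurable measurableSet_Ioc) ?_
    filter_upwards [ae_restrict_mem measurableSet_Ioc] with x hx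
    exact hC x (Ioc_subset_Icc_self hx)
  · simp [Ioc_eq_empty (not_lt.mpr hab.le), integrableOn_empty]

lemma ii_of_int {g : ℝ → ℝ} {x : ℝ} (hx : 0 ≤ x) (h : IntegrableOn g (Ioc 0 x)) :
    IntervalIntegrable g volume 0 x :=
  (intervalIntegrable_iff_integrableOn_Ioc_of_le hx).mpr h

lemma sq_primitive {g : ℝ → ℝ} {b : ℝ} (hg : IntegrableOn g (Ioc 0 b)) :
    ∫ t in Ioc (0:ℝ) b, (∫ s in Ioc (0:ℝ) t, g s) * g t = (∫ t in Ioc (0:ℝ) b, g t) ^ 2 / 2 := by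
  set μ := volume.restrict (Ioc (0:ℝ) b) with hμ
  set G : ℝ → ℝ := fun t => ∫ s in Ioc (0:ℝ) t, g s with hG
  have hGcont : ContinuousOn G (Icc 0 b) :=
    intervalIntegral.continuousOn_primitive ((integrableOn_Icc_iff_integrableOn_Ioc).mpr hg)
  have hGg : Integrable (fun t => G t * g t) μ := contMul_integrable hGcont hg
  set F : ℝ × ℝ → ℝ := fun p => if p.1 < p.2 then g p.1 * g p.2 else 0 with hF
  have hFind : F = ({p : ℝ × ℝ | p.1 < p.2}).indicator (fun p => g p.1 * g p.2) := by
    ext p; by_cases h : p.1 < p.2 <;> simp [hF, h, indicator_apply]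
  have hFint : Integrable F (μ.prod μ) := by
    rw [hFind]
    exact (hg.mul_prod hg).indicator (measurableSet_lt measurable_fst measurable_snd)
  set I : ℝ := ∫ t in Ioc (0:ℝ) b, g t with hI
  have E1 : ∀ t ∈ Ioc (0:ℝ) b, (∫ s, F (s, t) ∂μ) = G t * g t := by
    intro t ht
    have : (fun s => F (s, t)) = fun s => (Iio t).indicator g s * g t := by
      ext s; by_cases h : s < t <;> simp [hF, indicator_apply, h]
    rw [this, integral_mul_const, integral_indicator measurableSet_Iio, hμ,
      Measure.restrict_restrict measurableSet_Iio]
    have hset : Iio t ∩ Ioc 0 b = Ioo 0 t := by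
      ext s; constructor
      · rintro ⟨h1, h2, h3⟩; exact ⟨h2, h1⟩
      · rintro ⟨h1, h2⟩; exact ⟨h2, h1, h2.le.trans ht.2⟩
    rw [hset, ← integral_Ioc_eq_integral_Ioo]
  have E2 : ∀ s ∈ Ioc (0:ℝ) b, (∫ t, F (s, t) ∂μ) = g s * (I - G s) := by
    intro s hs
    have : (fun t => F (s, t)) = fun t => g s * (Ioi s).indicator g t := by
      ext t; by_cases h : s < t <;> simp [hF, indicator_apply, h]
    rw [this, integral_const_mul, integral_indicator measurableSet_Ioi, hμ,
      Measure.restrict_restrict measurableSet_Ioi]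
    have hset : Ioi s ∩ Ioc 0 b = Ioc s b := by
      ext t; constructor
      · rintro ⟨h1, _, h3⟩; exact ⟨h1, h3⟩
      · rintro ⟨h1, h2⟩; exact ⟨h1, hs.1.trans h1, h2⟩
    rw [hset]
    have hsplit : I = G s + ∫ t in Ioc s b, g t := by
      rw [hI, hG, ← setIntegral_union (Set.Ioc_disjoint_Ioc_of_le le_rfl) measurableSet_Ioc
        (hg.mono_set (Ioc_subset_Ioc le_rfl hs.2)) (hg.mono_set (Ioc_subset_Ioc hs.1.le le_rfl)),
        Set.Ioc_union_Ioc_eq_Ioc hs.1.le hs.2]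
    rw [hsplit]; ring
  have key : (∫ t in Ioc (0:ℝ) b, G t * g t) = I * I - ∫ t in Ioc (0:ℝ) b, G t * g t := by
    calc (∫ t in Ioc (0:ℝ) b, G t * g t)
        = ∫ t, (∫ s, F (s, t) ∂μ) ∂μ := by
          rw [hμ]; exact (setIntegral_congr_fun measurableSet_Ioc (fun t ht => (E1 t ht).symm))
      _ = ∫ s, (∫ t, F (s, t) ∂μ) ∂μ := (integral_integral_swap hFint).symm
      _ = ∫ s, g s * (I - G s) ∂μ := by
          rw [hμ]; exact setIntegral_congr_fun measurableSet_Ioc (fun s hs => E2 s hs)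
      _ = I * I - ∫ t in Ioc (0:ℝ) b, G t * g t := by
          have h1 : Integrable (fun s => g s * I) μ := hg.mul_const I
          have heq : (fun s => g s * (I - G s)) = fun s => g s * I - G s * g s := by
            ext s; ring
          rw [heq, integral_sub h1 hGg, integral_mul_const]
  nlinarith [key]

lemma sq_repr_Ioc {g : ℝ → ℝ} {x c : ℝ} (hg : IntegrableOn g (Ioc 0 x)) :
    (c + ∫ t in Ioc (0:ℝ) x, g t) ^ 2
      = c ^ 2 + ∫ t in Ioc (0:ℝ) x, 2 * (c + ∫ s in Ioc (0:ℝ) t, g s) * g t := by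
  have hGcont : ContinuousOn (fun t => ∫ s in Ioc (0:ℝ) t, g s) (Icc 0 x) :=
    intervalIntegral.continuousOn_primitive ((integrableOn_Icc_iff_integrableOn_Ioc).mpr hg)
  have hGg : IntegrableOn (fun t => (∫ s in Ioc (0:ℝ) t, g s) * g t) (Ioc 0 x) :=
    contMul_integrable hGcont hg
  have h0 : (fun t => 2 * (c + ∫ s in Ioc (0:ℝ) t, g s) * g t)
      = fun t => (2*c) * g t + 2 * ((∫ s in Ioc (0:ℝ) t, g s) * g t) := funext fun t => by ring
  have h1 : ∫ t in Ioc (0:ℝ) x, 2 * (c + ∫ s in Ioc (0:ℝ) t, g s) * g t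
      = (2*c) * (∫ t in Ioc (0:ℝ) x, g t) + 2 * ((∫ t in Ioc (0:ℝ) x, g t)^2/2) := by
    rw [h0, integral_add (hg.const_mul (2*c)) (hGg.const_mul 2),
      MeasureTheory.integral_const_mul, MeasureTheory.integral_const_mul, sq_primitive hg]
  rw [h1]; ring

lemma interval_to_Ioc {g : ℝ → ℝ} {x : ℝ} (hx : 0 ≤ x) :
    ∫ t in (0:ℝ)..x, g t = ∫ t in Ioc (0:ℝ) x, g t := intervalIntegral.integral_of_le hx

lemma sq_of_primitive {ℓ : ℝ} {v g : ℝ → ℝ} (hg : IntegrableOn g (Ioc 0 ℓ))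
    (hv : ∀ x ∈ Icc (0:ℝ) ℓ, v x = v 0 + ∫ t in (0:ℝ)..x, g t) :
    ∀ x ∈ Icc (0:ℝ) ℓ, v x ^ 2 = v 0 ^ 2 + ∫ t in (0:ℝ)..x, 2 * v t * g t := by
  intro x hx
  have hgx : IntegrableOn g (Ioc 0 x) := hg.mono_set (Ioc_subset_Ioc le_rfl hx.2)
  have hcongr : ∫ t in (0:ℝ)..x, 2 * v t * g t
      = ∫ t in Ioc (0:ℝ) x, 2 * (v 0 + ∫ s in Ioc (0:ℝ) t, g s) * g t := by
    rw [interval_to_Ioc hx.1]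
    refine setIntegral_congr_fun measurableSet_Ioc (fun t ht => ?_)
    rw [hv t ⟨ht.1.le, ht.2.trans hx.2⟩, interval_to_Ioc ht.1.le]
  rw [hcongr, hv x hx, interval_to_Ioc hx.1, sq_repr_Ioc hgx]

lemma sq_of_deriv {ℓ : ℝ} {y y' : ℝ → ℝ}
    (hd : ∀ x ∈ Icc (0:ℝ) ℓ, HasDerivAt y (y' x) x) (hc : ContinuousOn y' (Icc (0:ℝ) ℓ)) :
    ∀ x ∈ Icc (0:ℝ) ℓ, y x ^ 2 = y 0 ^ 2 + ∫ t in (0:ℝ)..x, 2 * y t * y' t := by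
  intro x hx
  have huIcc : uIcc (0:ℝ) x ⊆ Icc 0 ℓ := by
    rw [uIcc_of_le hx.1]; exact Icc_subset_Icc le_rfl hx.2
  have hyc : ContinuousOn y (Icc (0:ℝ) ℓ) :=
    fun t ht => (hd t ht).continuousAt.continuousWithinAt
  have hint : IntervalIntegrable (fun t => 2 * y t * y' t) volume 0 x :=
    (((hyc.mono huIcc).const_smul (2:ℝ)).mul (hc.mono huIcc)).intervalIntegrable
  have := intervalIntegral.integral_eq_sub_of_hasDerivAt (f := fun t => y t ^ 2)
    (f' := fun t => 2 * y t * y' t) (fun t ht => by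
      simpa [mul_comm, mul_assoc, mul_left_comm] using (hd t (huIcc ht)).fun_pow 2) hint
  rw [this]; ring

lemma energy_identity {ℓ A : ℝ} {g y y' : ℝ → ℝ}
    (hd : ∀ x ∈ Icc (0:ℝ) ℓ, HasDerivAt y (y' x) x) (hc : ContinuousOn y' (Icc (0:ℝ) ℓ))
    (hg : IntegrableOn g (Ioc 0 ℓ))
    (hi : ∀ x ∈ Icc (0:ℝ) ℓ, y' x = y' 0 + ∫ t in (0:ℝ)..x, g t) :
    ∀ x ∈ Icc (0:ℝ) ℓ, A * y x ^ 2 + y' x ^ 2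
      = (A * y 0 ^ 2 + y' 0 ^ 2) + ∫ t in (0:ℝ)..x, (A * (2 * y t * y' t) + 2 * y' t * g t) := by
  intro x hx
  have hyc : ContinuousOn y (Icc (0:ℝ) ℓ) := fun t ht => (hd t ht).continuousAt.continuousWithinAt
  have huIcc : uIcc (0:ℝ) x ⊆ Icc 0 ℓ := by
    rw [uIcc_of_le hx.1]; exact Icc_subset_Icc le_rfl hx.2
  have hA : IntervalIntegrable (fun t => A * (2 * y t * y' t)) volume 0 x := by
    apply ContinuousOn.intervalIntegrable
    exact (continuousOn_const.mul (((continuousOn_const.mul (hyc.mono huIcc)).mul (hc.mono huIcc))))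
  have hB : IntervalIntegrable (fun t => 2 * y' t * g t) volume 0 x := by
    refine ii_of_int hx.1 (contMul_integrable (u := fun t => 2 * y' t)
      ((continuousOn_const.mul hc).mono (Icc_subset_Icc le_rfl hx.2))
      (hg.mono_set (Ioc_subset_Ioc le_rfl hx.2)))
  have h1 := sq_of_deriv hd hc x hx
  have h2 := sq_of_primitive hg hi x hx
  rw [intervalIntegral.integral_add hA hB, intervalIntegral.integral_const_mul]
  linear_combination A * h1 + h2

lemma apriori {ℓ E r : ℝ} {q y y' : ℝ → ℝ} (hℓ : 0 < ℓ) (hE : 0 < E) (hr : 0 < r)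
    (hrℓ : r * ℓ ≤ 1/8) (hq : IntegrableOn q (Ioc 0 ℓ))
    (hqn : (∫ t in Ioc (0:ℝ) ℓ, |q t|) ≤ r / 4)
    (hd : ∀ x ∈ Icc (0:ℝ) ℓ, HasDerivAt y (y' x) x) (hc : ContinuousOn y' (Icc (0:ℝ) ℓ))
    (hi : ∀ x ∈ Icc (0:ℝ) ℓ, y' x = y' 0 + ∫ t in (0:ℝ)..x, (q t - E) * y t) :
    ∀ x ∈ Icc (0:ℝ) ℓ, (E + r^2) * y x ^ 2 + y' x ^ 2
      ≤ 4 * ((E + r^2) * y 0 ^ 2 + y' 0 ^ 2) := by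
  have hyc : ContinuousOn y (Icc (0:ℝ) ℓ) := fun t ht => (hd t ht).continuousAt.continuousWithinAt
  have hgint : IntegrableOn (fun t => (q t - E) * y t) (Ioc 0 ℓ) := by
    have : (fun t => (q t - E) * y t) = fun t => y t * q t + (- E) * y t := funext fun t => by ring
    rw [this]
    exact (contMul_integrable hyc hq).add
      (((continuousOn_const.mul hyc).integrableOn_Icc).mono_set Ioc_subset_Icc_self)
  have hPid := energy_identity (A := E + r^2) hd hc hgint hi
  have hPcont : ContinuousOn (fun x => (E + r^2) * y x ^ 2 + y' x ^ 2) (Icc (0:ℝ) ℓ) := by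
    exact (continuousOn_const.mul (hyc.pow 2)).add (hc.pow 2)
  obtain ⟨z, hz, hmax⟩ := isCompact_Icc.exists_isMaxOn (nonempty_Icc.mpr hℓ.le) hPcont
  set T : ℝ := (E + r^2) * y z ^ 2 + y' z ^ 2 with hTdef
  have hTmax : ∀ x ∈ Icc (0:ℝ) ℓ, (E + r^2) * y x ^ 2 + y' x ^ 2 ≤ T := fun x hx => hmax hx
  have hT0 : 0 ≤ T := by positivity
  have hrT : 0 ≤ Real.sqrt T := Real.sqrt_nonneg T
  have hsT : Real.sqrt T * Real.sqrt T = T := Real.mul_self_sqrt hT0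
  clear_value T
  have hyb : ∀ t ∈ Icc (0:ℝ) ℓ, r * |y t| ≤ Real.sqrt T := by
    intro t ht
    have h1 : (r * y t) ^ 2 ≤ T := by nlinarith [hTmax t ht, sq_nonneg (y' t), sq_nonneg (y t), hE]
    have := Real.abs_le_sqrt h1
    rwa [abs_mul, abs_of_pos hr] at this
  have hy'b : ∀ t ∈ Icc (0:ℝ) ℓ, |y' t| ≤ Real.sqrt T := by
    intro t ht
    exact Real.abs_le_sqrt (by nlinarith [hTmax t ht, sq_nonneg (y t), hE])
  have key : ∀ x ∈ Icc (0:ℝ) ℓ, (E + r^2) * y x ^ 2 + y' x ^ 2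
      ≤ ((E + r^2) * y 0 ^ 2 + y' 0 ^ 2) + (3/4) * T := by
    intro x hx
    rw [hPid x hx]
    have hix : IntervalIntegrable (fun t => (E + r^2) * (2 * y t * y' t)
        + 2 * y' t * ((q t - E) * y t)) volume 0 x := by
      apply ii_of_int hx.1
      have e : (fun t => (E + r^2) * (2 * y t * y' t) + 2 * y' t * ((q t - E) * y t))
          = fun t => ((2*(y t * y' t)) * q t + (2*r^2) * (y t * y' t)) := funext fun t => by ring
      rw [e]
      have big : IntegrableOn (fun t => (2*(y t * y' t)) * q t + (2*r^2) * (y t * y' t)) (Ioc 0 ℓ) :=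
        (contMul_integrable (u := fun t => 2*(y t * y' t))
          (continuousOn_const.mul (hyc.mul hc)) hq).add
        (((continuousOn_const.mul (hyc.mul hc)).integrableOn_Icc).mono_set
          Ioc_subset_Icc_self)
      exact big.mono_set (Ioc_subset_Ioc le_rfl hx.2)
    have hbint : IntervalIntegrable (fun t => 2*r*T + (2*T/r) * |q t|) volume 0 x := by
      apply ii_of_int hx.1
      have big : IntegrableOn (fun t => 2*r*T + (2*T/r) * |q t|) (Ioc 0 ℓ) :=
        (integrable_const _).add ((hq.abs.const_mul _))
      exact big.mono_set (Ioc_subset_Ioc le_rfl hx.2)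
    have hmono := intervalIntegral.integral_mono_on hx.1 hix hbint (fun t ht => by
      have ht' : t ∈ Icc (0:ℝ) ℓ := ⟨ht.1, ht.2.trans hx.2⟩
      have hyy' : r * |y t * y' t| ≤ T := by
        rw [abs_mul, ← mul_assoc]
        calc r * |y t| * |y' t| ≤ Real.sqrt T * Real.sqrt T :=
          mul_le_mul (hyb t ht') (hy'b t ht') (abs_nonneg _) hrT
        _ = T := hsT
      have e : (E + r^2) * (2 * y t * y' t) + 2 * y' t * ((q t - E) * y t)
          = (2*r^2 + 2*q t) * (y t * y' t) := by ring
      rw [e]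
      calc (2*r^2 + 2*q t) * (y t * y' t) ≤ |(2*r^2 + 2*q t) * (y t * y' t)| := le_abs_self _
        _ ≤ (2*r^2 + 2*|q t|) * |y t * y' t| := by
            rw [abs_mul]
            apply mul_le_mul_of_nonneg_right _ (abs_nonneg _)
            calc |2*r^2 + 2*q t| ≤ |2*r^2| + |2*q t| := abs_add_le _ _
              _ = 2*r^2 + 2*|q t| := by rw [abs_of_nonneg (by positivity), abs_mul]; simp
        _ ≤ 2*r*T + (2*T/r) * |q t| := by
            have h2 : 2*r^2 * |y t * y' t| ≤ 2*r*T := by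
              have := mul_le_mul_of_nonneg_left hyy' (by positivity : (0:ℝ) ≤ 2*r)
              nlinarith [this]
            have h3 : 2*|q t| * |y t * y' t| ≤ (2*T/r) * |q t| := by
              have hY : |y t * y' t| ≤ T / r := by
                rw [le_div_iff₀ hr]; linarith [hyy']
              calc 2*|q t| * |y t * y' t| ≤ 2*|q t| * (T/r) :=
                    mul_le_mul_of_nonneg_left hY (by positivity)
                _ = (2*T/r) * |q t| := by field_simp
            have hexp : (2*r^2 + 2*|q t|) * |y t * y' t|
                = 2*r^2 * |y t * y' t| + 2*|q t| * |y t * y' t| := by ring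
            rw [hexp]; linarith [h2, h3])
    have hval : (∫ t in (0:ℝ)..x, (2*r*T + (2*T/r) * |q t|)) ≤ (3/4) * T := by
      have i1 : IntervalIntegrable (fun _ : ℝ => 2*r*T) volume 0 x :=
        intervalIntegrable_const
      have i2 : IntervalIntegrable (fun t => (2*T/r) * |q t|) volume 0 x := by
        apply ii_of_int hx.1
        have big : IntegrableOn (fun t => (2*T/r) * |q t|) (Ioc 0 ℓ) := hq.abs.const_mul _
        exact big.mono_set (Ioc_subset_Ioc le_rfl hx.2)
      rw [intervalIntegral.integral_add i1 i2, intervalIntegral.integral_const,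
        intervalIntegral.integral_const_mul]
      have hq1 : (∫ t in (0:ℝ)..x, |q t|) ≤ r/4 := by
        rw [intervalIntegral.integral_of_le hx.1]
        refine le_trans (setIntegral_mono_set hq.abs ?_ ?_) hqn
        · filter_upwards with t using abs_nonneg _
        · exact HasSubset.Subset.eventuallyLE (Ioc_subset_Ioc le_rfl hx.2)
      have hq0 : (0:ℝ) ≤ ∫ t in (0:ℝ)..x, |q t| := by
        rw [intervalIntegral.integral_of_le hx.1]
        positivity
      have hx2 : x ≤ ℓ := hx.2
      have e1 : (x - 0) • (2*r*T) = x * (2*r*T) := by simp [smul_eq_mul]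
      rw [e1]
      have hrx : r * x ≤ 1/8 := le_trans (mul_le_mul_of_nonneg_left hx2 hr.le) hrℓ
      have h4 : x * (2*r*T) ≤ (1/4) * T := by
        have e2 : x * (2*r*T) = 2*T*(r*x) := by ring
        rw [e2]
        calc 2*T*(r*x) ≤ 2*T*(1/8) := mul_le_mul_of_nonneg_left hrx (by positivity)
          _ = (1/4)*T := by ring
      have h5 : 2*T/r * ∫ t in (0:ℝ)..x, |q t| ≤ (1/2) * T := by
        have h6 : (0:ℝ) ≤ 2*T/r := by positivity
        calc 2*T/r * ∫ t in (0:ℝ)..x, |q t| ≤ 2*T/r * (r/4) :=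
              mul_le_mul_of_nonneg_left hq1 h6
          _ = (1/2)*T := by field_simp; ring
      linarith
    linarith [hmono, hval]
  have hTfinal : T ≤ 4 * ((E + r^2) * y 0 ^ 2 + y' 0 ^ 2) := by
    have h := key z hz
    rw [← hTdef] at h
    linarith
  intro x hx
  linarith [hTmax x hx, hTfinal]

lemma deviation {ℓ E r M θ : ℝ} {q Y w w' : ℝ → ℝ}
    (hℓ : 0 < ℓ) (hE : 0 < E) (hr : 0 < r) (hrℓ : r * ℓ ≤ 1/8)
    (hq : IntegrableOn q (Ioc 0 ℓ)) (hθ : (∫ t in Ioc (0:ℝ) ℓ, |q t|) ≤ θ)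
    (hYc : ContinuousOn Y (Icc (0:ℝ) ℓ)) (hM : ∀ t ∈ Icc (0:ℝ) ℓ, |Y t| ≤ M)
    (hd : ∀ x ∈ Icc (0:ℝ) ℓ, HasDerivAt w (w' x) x) (hc : ContinuousOn w' (Icc (0:ℝ) ℓ))
    (h0 : w 0 = 0) (h0' : w' 0 = 0)
    (hi : ∀ x ∈ Icc (0:ℝ) ℓ, w' x = w' 0 + ∫ t in (0:ℝ)..x, (q t * Y t - E * w t)) :
    |w ℓ| ≤ 3 * θ * M / r ∧ |w' ℓ| ≤ 3 * θ * M := by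
  have hM0 : 0 ≤ M := le_trans (abs_nonneg _) (hM 0 ⟨le_rfl, hℓ.le⟩)
  have hθ0 : 0 ≤ θ := le_trans (by positivity) hθ
  have hwc : ContinuousOn w (Icc (0:ℝ) ℓ) := fun t ht => (hd t ht).continuousAt.continuousWithinAt
  have hgint : IntegrableOn (fun t => q t * Y t - E * w t) (Ioc 0 ℓ) := by
    have e : (fun t => q t * Y t - E * w t) = fun t => Y t * q t + (-E) * w t :=
      funext fun t => by ring
    rw [e]
    exact (contMul_integrable hYc hq).add
      (((continuousOn_const.mul hwc).integrableOn_Icc).mono_set Ioc_subset_Icc_self)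
  have hSid := energy_identity (A := E + r^2) hd hc hgint hi
  have hScont : ContinuousOn (fun x => (E + r^2) * w x ^ 2 + w' x ^ 2) (Icc (0:ℝ) ℓ) :=
    (continuousOn_const.mul (hwc.pow 2)).add (hc.pow 2)
  obtain ⟨z, hz, hmax⟩ := isCompact_Icc.exists_isMaxOn (nonempty_Icc.mpr hℓ.le) hScont
  set T : ℝ := (E + r^2) * w z ^ 2 + w' z ^ 2 with hTdef
  have hTmax : ∀ x ∈ Icc (0:ℝ) ℓ, (E + r^2) * w x ^ 2 + w' x ^ 2 ≤ T := fun x hx => hmax hx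
  have hT0 : 0 ≤ T := by positivity
  have hrT : 0 ≤ Real.sqrt T := Real.sqrt_nonneg T
  have hsT : Real.sqrt T * Real.sqrt T = T := Real.mul_self_sqrt hT0
  clear_value T
  have hwb : ∀ t ∈ Icc (0:ℝ) ℓ, r * |w t| ≤ Real.sqrt T := by
    intro t ht
    have h1 : (r * w t) ^ 2 ≤ T := by nlinarith [hTmax t ht, sq_nonneg (w' t), sq_nonneg (w t), hE]
    have := Real.abs_le_sqrt h1
    rwa [abs_mul, abs_of_pos hr] at this
  have hw'b : ∀ t ∈ Icc (0:ℝ) ℓ, |w' t| ≤ Real.sqrt T := by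
    intro t ht
    exact Real.abs_le_sqrt (by nlinarith [hTmax t ht, sq_nonneg (w t), hE])
  have key : ∀ x ∈ Icc (0:ℝ) ℓ, (E + r^2) * w x ^ 2 + w' x ^ 2
      ≤ (1/4) * T + 2 * M * Real.sqrt T * θ := by
    intro x hx
    have hS0 : (E + r^2) * w 0 ^ 2 + w' 0 ^ 2 = 0 := by rw [h0, h0']; ring
    rw [hSid x hx, hS0, zero_add]
    have hix : IntervalIntegrable (fun t => (E + r^2) * (2 * w t * w' t)
        + 2 * w' t * (q t * Y t - E * w t)) volume 0 x := by
      apply ii_of_int hx.1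
      have e : (fun t => (E + r^2) * (2 * w t * w' t) + 2 * w' t * (q t * Y t - E * w t))
          = fun t => (2 * w' t * Y t) * q t + (2*r^2) * (w t * w' t) := funext fun t => by ring
      rw [e]
      have big : IntegrableOn (fun t => (2 * w' t * Y t) * q t + (2*r^2) * (w t * w' t)) (Ioc 0 ℓ) :=
        (contMul_integrable ((continuousOn_const.mul hc).mul hYc) hq).add
          (((continuousOn_const.mul (hwc.mul hc)).integrableOn_Icc).mono_set Ioc_subset_Icc_self)
      exact big.mono_set (Ioc_subset_Ioc le_rfl hx.2)
    have hbint : IntervalIntegrable (fun t => 2*r*T + (2*M*Real.sqrt T) * |q t|) volume 0 x := by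
      apply ii_of_int hx.1
      have big : IntegrableOn (fun t => 2*r*T + (2*M*Real.sqrt T) * |q t|) (Ioc 0 ℓ) :=
        (integrable_const _).add (hq.abs.const_mul _)
      exact big.mono_set (Ioc_subset_Ioc le_rfl hx.2)
    have hmono := intervalIntegral.integral_mono_on hx.1 hix hbint (fun t ht => by
      have ht' : t ∈ Icc (0:ℝ) ℓ := ⟨ht.1, ht.2.trans hx.2⟩
      have hww' : r * |w t * w' t| ≤ T := by
        rw [abs_mul, ← mul_assoc]
        calc r * |w t| * |w' t| ≤ Real.sqrt T * Real.sqrt T :=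
              mul_le_mul (hwb t ht') (hw'b t ht') (abs_nonneg _) hrT
          _ = T := hsT
      have e : (E + r^2) * (2 * w t * w' t) + 2 * w' t * (q t * Y t - E * w t)
          = 2*r^2 * (w t * w' t) + 2 * q t * Y t * w' t := by ring
      rw [e]
      have h2 : 2*r^2 * (w t * w' t) ≤ 2*r*T := by
        have hle : 2*r^2 * (w t * w' t) ≤ 2*r^2 * |w t * w' t| :=
          mul_le_mul_of_nonneg_left (le_abs_self _) (by positivity)
        have := mul_le_mul_of_nonneg_left hww' (by positivity : (0:ℝ) ≤ 2*r)
        nlinarith [hle, this]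
      have h3 : 2 * q t * Y t * w' t ≤ (2*M*Real.sqrt T) * |q t| := by
        calc 2 * q t * Y t * w' t ≤ |2 * q t * Y t * w' t| := le_abs_self _
          _ = 2 * |q t| * |Y t| * |w' t| := by
              rw [abs_mul, abs_mul, abs_mul]; simp [abs_of_nonneg]
          _ ≤ 2 * |q t| * M * Real.sqrt T := by
              apply mul_le_mul (mul_le_mul_of_nonneg_left (hM t ht') (by positivity))
                (hw'b t ht') (abs_nonneg _) (by positivity)
          _ = (2*M*Real.sqrt T) * |q t| := by ring
      linarith [h2, h3])
    have hval : (∫ t in (0:ℝ)..x, (2*r*T + (2*M*Real.sqrt T) * |q t|))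
        ≤ (1/4) * T + 2 * M * Real.sqrt T * θ := by
      have i1 : IntervalIntegrable (fun _ : ℝ => 2*r*T) volume 0 x := intervalIntegrable_const
      have i2 : IntervalIntegrable (fun t => (2*M*Real.sqrt T) * |q t|) volume 0 x := by
        apply ii_of_int hx.1
        have big : IntegrableOn (fun t => (2*M*Real.sqrt T) * |q t|) (Ioc 0 ℓ) :=
          hq.abs.const_mul _
        exact big.mono_set (Ioc_subset_Ioc le_rfl hx.2)
      rw [intervalIntegral.integral_add i1 i2, intervalIntegral.integral_const,
        intervalIntegral.integral_const_mul]
      have hq1 : (∫ t in (0:ℝ)..x, |q t|) ≤ θ := by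
        rw [intervalIntegral.integral_of_le hx.1]
        refine le_trans (setIntegral_mono_set hq.abs ?_ ?_) hθ
        · filter_upwards with t using abs_nonneg _
        · exact HasSubset.Subset.eventuallyLE (Ioc_subset_Ioc le_rfl hx.2)
      have e1 : (x - 0) • (2*r*T) = x * (2*r*T) := by simp [smul_eq_mul]
      rw [e1]
      have hrx : r * x ≤ 1/8 := le_trans (mul_le_mul_of_nonneg_left hx.2 hr.le) hrℓ
      have h4 : x * (2*r*T) ≤ (1/4) * T := by
        have e2 : x * (2*r*T) = 2*T*(r*x) := by ring
        rw [e2]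
        calc 2*T*(r*x) ≤ 2*T*(1/8) := mul_le_mul_of_nonneg_left hrx (by positivity)
          _ = (1/4)*T := by ring
      have h5 : 2*M*Real.sqrt T * ∫ t in (0:ℝ)..x, |q t| ≤ 2*M*Real.sqrt T * θ :=
        mul_le_mul_of_nonneg_left hq1 (by positivity)
      linarith
    linarith [hmono, hval]
  have hTz := key z hz
  rw [← hTdef] at hTz
  have hsqrtT : Real.sqrt T ≤ 3 * θ * M := by
    rcases eq_or_lt_of_le hrT with h | h
    · rw [← h]; positivity
    · have h2 : (3/4 * Real.sqrt T) * Real.sqrt T ≤ (2*M*θ) * Real.sqrt T := by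
        nlinarith [hTz, hsT]
      have h3 : 3/4 * Real.sqrt T ≤ 2*M*θ := le_of_mul_le_mul_right h2 h
      nlinarith [h3, mul_nonneg hM0 hθ0]
  constructor
  · have h1 : r * |w ℓ| ≤ 3 * θ * M := le_trans (hwb ℓ ⟨hℓ.le, le_rfl⟩) hsqrtT
    rw [le_div_iff₀ hr]
    linarith [h1]
  · exact le_trans (hw'b ℓ ⟨hℓ.le, le_rfl⟩) hsqrtT

lemma hasDerivAt_cos_k (k x : ℝ) :
    HasDerivAt (fun x => Real.cos (k*x)) (-(k * Real.sin (k*x))) x := by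
  have h1 : HasDerivAt (fun x : ℝ => k * x) k x := by
    simpa using (hasDerivAt_id x).const_mul k
  simpa [mul_comm, Function.comp_def] using (Real.hasDerivAt_cos (k*x)).comp x h1

lemma hasDerivAt_sin_k (k x : ℝ) :
    HasDerivAt (fun x => Real.sin (k*x)) (k * Real.cos (k*x)) x := by
  have h1 : HasDerivAt (fun x : ℝ => k * x) k x := by
    simpa using (hasDerivAt_id x).const_mul k
  simpa [mul_comm, Function.comp_def] using (Real.hasDerivAt_sin (k*x)).comp x h1

lemma hasDerivAt_sin_k_div (k x : ℝ) (hk : k ≠ 0) :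
    HasDerivAt (fun x => Real.sin (k*x) / k) (Real.cos (k*x)) x := by
  have h2 := (hasDerivAt_sin_k k x).div_const k
  have e : k * Real.cos (k*x) / k = Real.cos (k*x) := by field_simp
  rwa [e] at h2

lemma E_div_k {E : ℝ} (hE : 0 < E) : E / Real.sqrt E = Real.sqrt E := by
  rw [← Real.sq_sqrt hE.le]
  have hk0 : (0:ℝ) < Real.sqrt E := Real.sqrt_pos.mpr hE
  field_simp [pow_two]
  rw [Real.sqrt_sq hk0.le]

lemma integral_E_cos {E : ℝ} (x : ℝ) (hE : 0 < E) :
    (∫ t in (0:ℝ)..x, E * Real.cos (Real.sqrt E * t))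
      = Real.sqrt E * Real.sin (Real.sqrt E * x) := by
  set k := Real.sqrt E with hk
  have hk0 : 0 < k := Real.sqrt_pos.mpr hE
  have h := intervalIntegral.integral_eq_sub_of_hasDerivAt
    (f := fun t => (E/k) * Real.sin (k*t)) (f' := fun t => E * Real.cos (k*t))
    (fun t _ => by
      have h2 := (hasDerivAt_sin_k k t).const_mul (E/k)
      have e : (E/k) * (k * Real.cos (k*t)) = E * Real.cos (k*t) := by field_simp
      rwa [e] at h2)
    ((Continuous.intervalIntegrable (by continuity) 0 x))
  rw [h, E_div_k hE]
  simp [← hk]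

lemma integral_E_sin_div {E : ℝ} (x : ℝ) (hE : 0 < E) :
    (∫ t in (0:ℝ)..x, E * (Real.sin (Real.sqrt E * t) / Real.sqrt E))
      = 1 - Real.cos (Real.sqrt E * x) := by
  set k := Real.sqrt E with hk
  have hk0 : 0 < k := Real.sqrt_pos.mpr hE
  have hcongr : ∀ t : ℝ, E * (Real.sin (k * t) / k) = k * Real.sin (k*t) := by
    intro t
    rw [mul_div_assoc']
    rw [mul_comm E (Real.sin (k*t)), mul_div_assoc, E_div_k hE, mul_comm]
  simp only [hcongr]
  have h := intervalIntegral.integral_eq_sub_of_hasDerivAt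
    (f := fun t => -Real.cos (k*t)) (f' := fun t => k * Real.sin (k*t))
    (fun t _ => by simpa using (hasDerivAt_cos_k k t).fun_neg)
    ((Continuous.intervalIntegrable (by continuity) 0 x))
  rw [h]; simp; ring

lemma abs_le_two_of_sq {x c : ℝ} (hc : 0 < c) (h : c * x^2 ≤ 4 * c) : |x| ≤ 2 := by
  have h1 : x^2 ≤ 4 := by
    have := (mul_le_mul_iff_right₀ hc).mp (by linarith : c * x^2 ≤ c * 4)
    linarith
  have := Real.abs_le_sqrt h1
  rwa [show (4:ℝ) = 2^2 by norm_num, Real.sqrt_sq (by norm_num)] at this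

set_option maxHeartbeats 2000000 in
/-- Main estimate: the half trace is `O(lam)`-close to `cos(√E ℓ)`, uniformly in `E > 0`. -/
lemma halftrace_est {ℓ : ℝ} (hℓ : 0 < ℓ) (f : ℝ → ℝ) (hf : IntegrableOn f (Ioc 0 ℓ)) :
    ∃ δ > (0:ℝ), ∃ C > (0:ℝ), ∀ lam E v, 0 < E → |lam| ≤ δ →
      IsHalfTrace ℓ (fun t => lam * f t) E v →
      |v - Real.cos (Real.sqrt E * ℓ)| ≤ C * |lam| := by
  set Nf : ℝ := ∫ t in Ioc (0:ℝ) ℓ, |f t| with hNfdef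
  have hNf0 : 0 ≤ Nf := by
    rw [hNfdef]; exact setIntegral_nonneg measurableSet_Ioc (fun t _ => abs_nonneg _)
  set r : ℝ := 1/(8*(ℓ+1)) with hrdef
  have hr : 0 < r := by rw [hrdef]; positivity
  have hrℓ : r * ℓ ≤ 1/8 := by
    have h1 : r * ℓ ≤ r * (ℓ+1) := mul_le_mul_of_nonneg_left (by linarith) hr.le
    have h2 : r * (ℓ+1) = 1/8 := by rw [hrdef]; field_simp
    linarith
  clear_value r
  refine ⟨r/(4*(Nf+1)), by positivity, 6*Nf/r + 1, by positivity, ?_⟩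
  intro lam E v hE hlam hHT
  obtain ⟨yN, yN', yD, yD', ⟨solN, hN0, hN0'⟩, ⟨solD, hD0, hD0'⟩, hv⟩ := hHT
  set k := Real.sqrt E with hkdef
  have hk0 : 0 < k := Real.sqrt_pos.mpr hE
  have hk2 : k^2 = E := Real.sq_sqrt hE.le
  have hq : IntegrableOn (fun t => lam * f t) (Ioc 0 ℓ) := hf.const_mul lam
  have hqabs : (∫ t in Ioc (0:ℝ) ℓ, |lam * f t|) = |lam| * Nf := by
    rw [hNfdef, ← MeasureTheory.integral_const_mul]
    exact setIntegral_congr_fun measurableSet_Ioc (fun t _ => abs_mul lam (f t))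
  have hθr : |lam| * Nf ≤ r/4 := by
    have h1 : |lam| * Nf ≤ (r/(4*(Nf+1))) * Nf := mul_le_mul_of_nonneg_right hlam hNf0
    have h2 : (r/(4*(Nf+1))) * Nf ≤ r/4 := by
      rw [div_mul_eq_mul_div, div_le_div_iff₀ (by positivity) (by norm_num)]
      nlinarith [hr.le, hNf0]
    linarith
  have hqn : (∫ t in Ioc (0:ℝ) ℓ, |lam * f t|) ≤ r/4 := by rw [hqabs]; exact hθr
  -- Neumann piece
  obtain ⟨hdN, hcN, hiN⟩ := solN
  have hMN : ∀ t ∈ Icc (0:ℝ) ℓ, |yN t| ≤ 2 := by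
    intro t ht
    have hap := apriori hℓ hE hr hrℓ hq hqn hdN hcN hiN t ht
    rw [hN0, hN0'] at hap
    refine abs_le_two_of_sq (show (0:ℝ) < E + r^2 by positivity) ?_
    nlinarith [sq_nonneg (yN' t), hap]
  have hNcont : ContinuousOn yN (Icc (0:ℝ) ℓ) :=
    fun t ht => (hdN t ht).continuousAt.continuousWithinAt
  have hdwN : ∀ x ∈ Icc (0:ℝ) ℓ, HasDerivAt (fun x => yN x - Real.cos (k*x))
      ((fun x => yN' x + k * Real.sin (k*x)) x) x := by
    intro x hx
    simpa [sub_neg_eq_add] using (hdN x hx).fun_sub (hasDerivAt_cos_k k x)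
  have hcwN : ContinuousOn (fun x => yN' x + k * Real.sin (k*x)) (Icc (0:ℝ) ℓ) := by
    apply hcN.add
    exact (continuous_const.mul (Real.continuous_sin.comp (continuous_const.mul continuous_id))).continuousOn
  have h0wN : (fun x => yN x - Real.cos (k*x)) 0 = 0 := by simp [hN0]
  have h0wN' : (fun x => yN' x + k * Real.sin (k*x)) 0 = 0 := by simp [hN0']
  have hiwN : ∀ x ∈ Icc (0:ℝ) ℓ, (fun x => yN' x + k * Real.sin (k*x)) x
      = (fun x => yN' x + k * Real.sin (k*x)) 0
        + ∫ t in (0:ℝ)..x, ((lam * f t) * yN t - E * (yN t - Real.cos (k*t))) := by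
    intro x hx
    have h1 : yN' x = yN' 0 + ∫ t in (0:ℝ)..x, (lam * f t - E) * yN t := hiN x hx
    have h2 : k * Real.sin (k*x) = ∫ t in (0:ℝ)..x, E * Real.cos (k*t) :=
      (integral_E_cos x hE).symm
    have hiA : IntervalIntegrable (fun t => (lam * f t - E) * yN t) volume 0 x := by
      apply ii_of_int hx.1
      have e : (fun t => (lam * f t - E) * yN t) = fun t => yN t * (lam * f t) + (-E) * yN t :=
        funext fun t => by ring
      rw [e]
      have big : IntegrableOn (fun t => yN t * (lam * f t) + (-E) * yN t) (Ioc 0 ℓ) :=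
        (contMul_integrable hNcont hq).add
          (((continuousOn_const.mul hNcont).integrableOn_Icc).mono_set Ioc_subset_Icc_self)
      exact big.mono_set (Ioc_subset_Ioc le_rfl hx.2)
    have hiB : IntervalIntegrable (fun t => E * Real.cos (k*t)) volume 0 x :=
      Continuous.intervalIntegrable
        (continuous_const.mul (Real.continuous_cos.comp (continuous_const.mul continuous_id))) 0 x
    have h3 : (∫ t in (0:ℝ)..x, (lam * f t - E) * yN t) + (∫ t in (0:ℝ)..x, E * Real.cos (k*t))
        = ∫ t in (0:ℝ)..x, ((lam * f t) * yN t - E * (yN t - Real.cos (k*t))) := by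
      rw [← intervalIntegral.integral_add hiA hiB]
      apply intervalIntegral.integral_congr
      intro t _
      ring
    show yN' x + k * Real.sin (k*x) = yN' 0 + k * Real.sin (k*0) + _
    rw [h1, h2, hN0', mul_zero, Real.sin_zero, mul_zero]
    linarith [h3]
  obtain ⟨hwNval, -⟩ := deviation (M := 2) hℓ hE hr hrℓ hq (le_of_eq hqabs) hNcont hMN
    hdwN hcwN h0wN h0wN' hiwN
  -- Dirichlet piece
  obtain ⟨hdD, hcD, hiD⟩ := solD
  have hDcont : ContinuousOn yD (Icc (0:ℝ) ℓ) :=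
    fun t ht => (hdD t ht).continuousAt.continuousWithinAt
  have hMD : ∀ t ∈ Icc (0:ℝ) ℓ, |yD t| ≤ 2/r := by
    intro t ht
    have hap := apriori hℓ hE hr hrℓ hq hqn hdD hcD hiD t ht
    rw [hD0, hD0'] at hap
    have h1 : r^2 * yD t^2 ≤ 4 := by nlinarith [sq_nonneg (yD' t), hap, hE]
    have h2 : (r * yD t)^2 ≤ 4 := by nlinarith [h1]
    have h3 := Real.abs_le_sqrt h2
    rw [show (4:ℝ) = 2^2 from by norm_num, Real.sqrt_sq (by norm_num : (0:ℝ) ≤ 2),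
      abs_mul, abs_of_pos hr] at h3
    rw [le_div_iff₀ hr]
    linarith [h3]
  have hdwD : ∀ x ∈ Icc (0:ℝ) ℓ, HasDerivAt (fun x => yD x - Real.sin (k*x)/k)
      ((fun x => yD' x - Real.cos (k*x)) x) x := by
    intro x hx
    exact (hdD x hx).sub (hasDerivAt_sin_k_div k x hk0.ne')
  have hcwD : ContinuousOn (fun x => yD' x - Real.cos (k*x)) (Icc (0:ℝ) ℓ) := by
    apply hcD.sub
    exact (Real.continuous_cos.comp (continuous_const.mul continuous_id)).continuousOn
  have h0wD : (fun x => yD x - Real.sin (k*x)/k) 0 = 0 := by simp [hD0]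
  have h0wD' : (fun x => yD' x - Real.cos (k*x)) 0 = 0 := by simp [hD0']
  have hiwD : ∀ x ∈ Icc (0:ℝ) ℓ, (fun x => yD' x - Real.cos (k*x)) x
      = (fun x => yD' x - Real.cos (k*x)) 0
        + ∫ t in (0:ℝ)..x, ((lam * f t) * yD t - E * (yD t - Real.sin (k*t)/k)) := by
    intro x hx
    have h1 : yD' x = yD' 0 + ∫ t in (0:ℝ)..x, (lam * f t - E) * yD t := hiD x hx
    have h2 : 1 - Real.cos (k*x) = ∫ t in (0:ℝ)..x, E * (Real.sin (k*t)/k) :=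
      (integral_E_sin_div x hE).symm
    have hiA : IntervalIntegrable (fun t => (lam * f t - E) * yD t) volume 0 x := by
      apply ii_of_int hx.1
      have e : (fun t => (lam * f t - E) * yD t) = fun t => yD t * (lam * f t) + (-E) * yD t :=
        funext fun t => by ring
      rw [e]
      have big : IntegrableOn (fun t => yD t * (lam * f t) + (-E) * yD t) (Ioc 0 ℓ) :=
        (contMul_integrable hDcont hq).add
          (((continuousOn_const.mul hDcont).integrableOn_Icc).mono_set Ioc_subset_Icc_self)
      exact big.mono_set (Ioc_subset_Ioc le_rfl hx.2)
    have hiB : IntervalIntegrable (fun t => E * (Real.sin (k*t)/k)) volume 0 x :=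
      Continuous.intervalIntegrable (continuous_const.mul
        ((Real.continuous_sin.comp (continuous_const.mul continuous_id)).div_const k)) 0 x
    have h3 : (∫ t in (0:ℝ)..x, (lam * f t - E) * yD t)
          + (∫ t in (0:ℝ)..x, E * (Real.sin (k*t)/k))
        = ∫ t in (0:ℝ)..x, ((lam * f t) * yD t - E * (yD t - Real.sin (k*t)/k)) := by
      rw [← intervalIntegral.integral_add hiA hiB]
      apply intervalIntegral.integral_congr
      intro t _
      ring
    show yD' x - Real.cos (k*x) = yD' 0 - Real.cos (k*0) + _
    rw [h1, hD0', mul_zero, Real.cos_zero]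
    linarith [h3, h2]
  obtain ⟨-, hwDval⟩ := deviation (M := 2/r) hℓ hE hr hrℓ hq (le_of_eq hqabs) hDcont hMD
    hdwD hcwD h0wD h0wD' hiwD
  -- combine
  have hNfin : |yN ℓ - Real.cos (k*ℓ)| ≤ 6 * (|lam| * Nf) / r := by
    calc |yN ℓ - Real.cos (k*ℓ)| ≤ 3 * (|lam| * Nf) * 2 / r := hwNval
      _ = 6 * (|lam| * Nf) / r := by ring
  have hDfin : |yD' ℓ - Real.cos (k*ℓ)| ≤ 6 * (|lam| * Nf) / r := by
    calc |yD' ℓ - Real.cos (k*ℓ)| ≤ 3 * (|lam| * Nf) * (2/r) := hwDval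
      _ = 6 * (|lam| * Nf) / r := by ring
  have hvfin : v - Real.cos (k*ℓ)
      = ((yN ℓ - Real.cos (k*ℓ)) + (yD' ℓ - Real.cos (k*ℓ)))/2 := by
    rw [hv]; ring
  rw [hvfin]
  calc |((yN ℓ - Real.cos (k*ℓ)) + (yD' ℓ - Real.cos (k*ℓ)))/2|
      ≤ (|yN ℓ - Real.cos (k*ℓ)| + |yD' ℓ - Real.cos (k*ℓ)|)/2 := by
        rw [abs_div, show |(2:ℝ)| = 2 from by norm_num]
        linarith [abs_add_le (yN ℓ - Real.cos (k*ℓ)) (yD' ℓ - Real.cos (k*ℓ))]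
    _ ≤ 6 * (|lam| * Nf) / r := by linarith [hNfin, hDfin]
    _ ≤ (6*Nf/r + 1) * |lam| := by
        have h1 : 6 * (|lam| * Nf) / r = (6*Nf/r) * |lam| := by field_simp
        rw [h1]
        nlinarith [abs_nonneg lam]


lemma memLp_integrableOn {ℓ : ℝ} {f : ℝ → ℝ}
    (h : MeasureTheory.MemLp f 2 (volume.restrict (Set.Ioc 0 ℓ))) :
    IntegrableOn f (Ioc 0 ℓ) := by
  haveI : Fact (volume (Ioc (0:ℝ) ℓ) < ⊤) := ⟨measure_Ioc_lt_top⟩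
  exact h.integrable (by norm_num)

lemma concat_integrableOn {ℓa ℓb : ℝ} (ha : 0 < ℓa) (hb : 0 < ℓb) {fa fb : ℝ → ℝ}
    (hfa : IntegrableOn fa (Ioc 0 ℓa)) (hfb : IntegrableOn fb (Ioc 0 ℓb)) :
    IntegrableOn (concatPair ℓa fa fb) (Ioc 0 (ℓa + ℓb)) := by
  rw [← Set.Ioc_union_Ioc_eq_Ioc ha.le (by linarith : ℓa ≤ ℓa + ℓb), integrableOn_union]
  constructor
  · have hae : concatPair ℓa fa fb =ᵐ[volume.restrict (Ioc 0 ℓa)] fa := by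
      have h1 : ∀ᵐ (x:ℝ) ∂volume, x ≠ ℓa := by
        have hv : volume ({ℓa} : Set ℝ) = 0 := Real.volume_singleton
        rw [ae_iff]
        convert hv using 2
        ext x; simp
      filter_upwards [ae_restrict_mem measurableSet_Ioc,
        (ae_restrict_of_ae h1 : ∀ᵐ (x:ℝ) ∂volume.restrict (Ioc 0 ℓa), x ≠ ℓa)] with x hx hne
      have : x < ℓa := lt_of_le_of_ne hx.2 hne
      simp [concatPair, this]
    exact (integrable_congr hae).mpr hfa
  · have h2 : IntegrableOn (fun x => fb (x - ℓa)) (Ioc ℓa (ℓa + ℓb)) := by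
      have h3 := (ii_of_int hb.le hfb).comp_sub_right ℓa
      rw [zero_add] at h3
      have h4 := (intervalIntegrable_iff_integrableOn_Ioc_of_le
        (by linarith : ℓa ≤ ℓb + ℓa)).mp h3
      rwa [show ℓb + ℓa = ℓa + ℓb from by ring] at h4
    refine (integrable_congr ?_).mpr h2
    filter_upwards [ae_restrict_mem measurableSet_Ioc] with x hx
    have : ¬ x < ℓa := not_lt.mpr hx.1.le
    simp [concatPair, this]

lemma FV_cos (a b : ℝ) : FV (Real.cos (a+b)) (Real.cos a) (Real.cos b) = 0 := by
  have h1 := Real.sin_sq_add_cos_sq a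
  have h2 := Real.sin_sq_add_cos_sq b
  simp only [FV, Real.cos_add]
  linear_combination (Real.sin b)^2 * h1 + (1 - (Real.cos a)^2) * h2

lemma FV_step {D x x' y z : ℝ} (hD : 0 ≤ D) (hx : |x| ≤ 2) (hx' : |x'| ≤ 2)
    (hy : |y| ≤ 2) (hz : |z| ≤ 2) (h : |x - x'| ≤ D) : |FV x y z - FV x' y z| ≤ 12 * D := by
  have e : FV x y z - FV x' y z = (x - x') * ((x + x') - 2*(y*z)) := by simp only [FV]; ring
  rw [e, abs_mul]
  have hb : |(x + x') - 2*(y*z)| ≤ 12 := by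
    have h1 : |x + x'| ≤ 4 := le_trans (abs_add_le _ _) (by linarith)
    have h2 : |2*(y*z)| ≤ 8 := by
      rw [abs_mul, abs_mul, show |(2:ℝ)| = 2 from by norm_num]
      nlinarith [abs_nonneg y, abs_nonneg z, hy, hz]
    calc |(x+x') - 2*(y*z)| ≤ |x+x'| + |2*(y*z)| := abs_sub _ _
      _ ≤ 12 := by linarith
  calc |x - x'| * |(x+x') - 2*(y*z)| ≤ D * 12 := mul_le_mul h hb (abs_nonneg _) hD
    _ = 12*D := by ring

lemma FV_symm12 (x y z : ℝ) : FV x y z = FV y x z := by simp only [FV]; ring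
lemma FV_symm13 (x y z : ℝ) : FV x y z = FV z y x := by simp only [FV]; ring

end Aux

/-- the Fricke–Vogt invariant `I(E,λ)` tends to zero uniformly in `E > 0`
as the coupling `λ → 0`. -/
theorem frickeVogt_uniform_small_coupling
    (ℓa ℓb : ℝ) (hℓa : 0 < ℓa) (hℓb : 0 < ℓb) (fa fb : ℝ → ℝ)
    (hfa : MeasureTheory.MemLp fa 2 (MeasureTheory.volume.restrict (Set.Ioc 0 ℓa)))
    (hfb : MeasureTheory.MemLp fb 2 (MeasureTheory.volume.restrict (Set.Ioc 0 ℓb)))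
    (xa xb xab : ℝ → ℝ → ℝ)
    (hxa : ∀ lam E : ℝ, IsHalfTrace ℓa (fun t => lam * fa t) E (xa lam E))
    (hxb : ∀ lam E : ℝ, IsHalfTrace ℓb (fun t => lam * fb t) E (xb lam E))
    (hxab : ∀ lam E : ℝ,
      IsHalfTrace (ℓa + ℓb) (fun t => lam * concatPair ℓa fa fb t) E (xab lam E)) :
    ∀ ε > (0:ℝ), ∃ lam₀ > (0:ℝ), ∀ lam : ℝ, 0 < |lam| → |lam| < lam₀ →
      ∀ E > (0:ℝ), |FV (xab lam E) (xa lam E) (xb lam E)| < ε := by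
  have hfa' : IntegrableOn fa (Ioc 0 ℓa) := memLp_integrableOn hfa
  have hfb' : IntegrableOn fb (Ioc 0 ℓb) := memLp_integrableOn hfb
  have hℓab : 0 < ℓa + ℓb := by linarith
  have hfab' : IntegrableOn (concatPair ℓa fa fb) (Ioc 0 (ℓa + ℓb)) :=
    concat_integrableOn hℓa hℓb hfa' hfb'
  obtain ⟨δ1, hδ1, C1, hC1, H1⟩ := halftrace_est hℓab _ hfab'
  obtain ⟨δ2, hδ2, C2, hC2, H2⟩ := halftrace_est hℓa fa hfa'
  obtain ⟨δ3, hδ3, C3, hC3, H3⟩ := halftrace_est hℓb fb hfb'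
  intro ε hε
  set D : ℝ := C1 + C2 + C3 with hDdef
  have hD0 : 0 < D := by rw [hDdef]; linarith
  clear_value D
  refine ⟨min δ1 (min δ2 (min δ3 (min (1/D) (ε/(40*D))))), by positivity, ?_⟩
  intro lam _hlam0 hlamlt E hE
  have hl1 : |lam| ≤ δ1 := le_of_lt (lt_of_lt_of_le hlamlt (min_le_left _ _))
  have hl2 : |lam| ≤ δ2 :=
    le_of_lt (lt_of_lt_of_le hlamlt ((min_le_right _ _).trans (min_le_left _ _)))
  have hl3 : |lam| ≤ δ3 := le_of_lt (lt_of_lt_of_le hlamlt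
    ((min_le_right _ _).trans ((min_le_right _ _).trans (min_le_left _ _))))
  have hlD : |lam| ≤ 1/D := le_of_lt (lt_of_lt_of_le hlamlt
    ((min_le_right _ _).trans ((min_le_right _ _).trans
      ((min_le_right _ _).trans (min_le_left _ _)))))
  have hlε : |lam| < ε/(40*D) := lt_of_lt_of_le hlamlt
    ((min_le_right _ _).trans ((min_le_right _ _).trans
      ((min_le_right _ _).trans (min_le_right _ _))))
  have e1 := H1 lam E _ hE hl1 (hxab lam E)
  have e2 := H2 lam E _ hE hl2 (hxa lam E)
  have e3 := H3 lam E _ hE hl3 (hxb lam E)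
  set a : ℝ := Real.sqrt E * ℓa with hadef
  set b : ℝ := Real.sqrt E * ℓb with hbdef
  have hab : Real.sqrt E * (ℓa + ℓb) = a + b := by rw [hadef, hbdef]; ring
  rw [hab] at e1
  clear_value a b
  have hlam0 : (0:ℝ) ≤ |lam| := abs_nonneg lam
  have hDl1 : D * |lam| ≤ 1 := by
    calc D * |lam| ≤ D * (1/D) := mul_le_mul_of_nonneg_left hlD hD0.le
      _ = 1 := by field_simp
  -- deviations bounded by D * |lam|
  have d1 : |xab lam E - Real.cos (a+b)| ≤ D * |lam| :=
    le_trans e1 (mul_le_mul_of_nonneg_right (by rw [hDdef]; linarith) hlam0)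
  have d2 : |xa lam E - Real.cos a| ≤ D * |lam| :=
    le_trans e2 (mul_le_mul_of_nonneg_right (by rw [hDdef]; linarith) hlam0)
  have d3 : |xb lam E - Real.cos b| ≤ D * |lam| :=
    le_trans e3 (mul_le_mul_of_nonneg_right (by rw [hDdef]; linarith) hlam0)
  have hDl0 : 0 ≤ D * |lam| := by positivity
  -- coordinate bounds
  have hcab : |Real.cos (a+b)| ≤ 2 := le_trans (Real.abs_cos_le_one _) one_le_two
  have hca : |Real.cos a| ≤ 2 := le_trans (Real.abs_cos_le_one _) one_le_two
  have hcb : |Real.cos b| ≤ 2 := le_trans (Real.abs_cos_le_one _) one_le_two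
  have hxab2 : |xab lam E| ≤ 2 := by
    have := abs_add_le (xab lam E - Real.cos (a+b)) (Real.cos (a+b))
    simp only [sub_add_cancel] at this
    have h1 : |Real.cos (a+b)| ≤ 1 := Real.abs_cos_le_one _
    linarith [d1, this, hDl1]
  have hxa2 : |xa lam E| ≤ 2 := by
    have := abs_add_le (xa lam E - Real.cos a) (Real.cos a)
    simp only [sub_add_cancel] at this
    have h1 : |Real.cos a| ≤ 1 := Real.abs_cos_le_one _
    linarith [d2, this, hDl1]
  have hxb2 : |xb lam E| ≤ 2 := by
    have := abs_add_le (xb lam E - Real.cos b) (Real.cos b)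
    simp only [sub_add_cancel] at this
    have h1 : |Real.cos b| ≤ 1 := Real.abs_cos_le_one _
    linarith [d3, this, hDl1]
  -- three swap steps
  have s1 : |FV (xab lam E) (xa lam E) (xb lam E)
      - FV (Real.cos (a+b)) (xa lam E) (xb lam E)| ≤ 12 * (D * |lam|) :=
    FV_step hDl0 hxab2 hcab hxa2 hxb2 d1
  have s2 : |FV (Real.cos (a+b)) (xa lam E) (xb lam E)
      - FV (Real.cos (a+b)) (Real.cos a) (xb lam E)| ≤ 12 * (D * |lam|) := by
    rw [FV_symm12 (Real.cos (a+b)) (xa lam E) (xb lam E),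
      FV_symm12 (Real.cos (a+b)) (Real.cos a) (xb lam E)]
    exact FV_step hDl0 hxa2 hca hcab hxb2 d2
  have s3 : |FV (Real.cos (a+b)) (Real.cos a) (xb lam E)
      - FV (Real.cos (a+b)) (Real.cos a) (Real.cos b)| ≤ 12 * (D * |lam|) := by
    rw [FV_symm13 (Real.cos (a+b)) (Real.cos a) (xb lam E),
      FV_symm13 (Real.cos (a+b)) (Real.cos a) (Real.cos b)]
    exact FV_step hDl0 hxb2 hcb hca hcab d3
  have h0 : FV (Real.cos (a+b)) (Real.cos a) (Real.cos b) = 0 := FV_cos a b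
  have htot : |FV (xab lam E) (xa lam E) (xb lam E)| ≤ 36 * (D * |lam|) := by
    have t1 := abs_add_le (FV (xab lam E) (xa lam E) (xb lam E)
        - FV (Real.cos (a+b)) (xa lam E) (xb lam E))
      (FV (Real.cos (a+b)) (xa lam E) (xb lam E)
        - FV (Real.cos (a+b)) (Real.cos a) (xb lam E))
    have t2 := abs_add_le ((FV (xab lam E) (xa lam E) (xb lam E)
        - FV (Real.cos (a+b)) (xa lam E) (xb lam E))
      + (FV (Real.cos (a+b)) (xa lam E) (xb lam E)
        - FV (Real.cos (a+b)) (Real.cos a) (xb lam E)))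
      (FV (Real.cos (a+b)) (Real.cos a) (xb lam E)
        - FV (Real.cos (a+b)) (Real.cos a) (Real.cos b))
    have e : FV (xab lam E) (xa lam E) (xb lam E)
        = ((FV (xab lam E) (xa lam E) (xb lam E)
            - FV (Real.cos (a+b)) (xa lam E) (xb lam E))
          + (FV (Real.cos (a+b)) (xa lam E) (xb lam E)
            - FV (Real.cos (a+b)) (Real.cos a) (xb lam E)))
          + (FV (Real.cos (a+b)) (Real.cos a) (xb lam E)
            - FV (Real.cos (a+b)) (Real.cos a) (Real.cos b)) := by
      linarith [h0]
    rw [e]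
    calc |_ + _| ≤ _ := t2
      _ ≤ 36 * (D * |lam|) := by linarith [t1, s1, s2, s3]
  have hfin : 36 * (D * |lam|) < ε := by
    have h1 : D * |lam| < D * (ε/(40*D)) := mul_lt_mul_of_pos_left hlε hD0
    have h2 : D * (ε/(40*D)) = ε/40 := by field_simp
    linarith [h1]
  linarith [htot, hfin]
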